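/- Let (Ω,F,(F_j)_{j≥0},P) be a filtered probability space and let (z_t)_{t≥1} be a square-integrable (F_t)-adapted process with values in ℝ^m. Let T ≥ k ≥ 1 be integers, ν > 0 and ξ ∈ (0,1], and suppose (z_t) satisfies the (k,ν,ξ)-block martingale small-ball (BMSB) condition up to time T. Then for every unit vector w ∈ ℝ^m, Σ_{t=1}^{k·⌊(T−1)/k⌋} E[⟨w, z_t⟩²] ≥ k·⌊(T−1)/k⌋·ξ²·ν². In particular, the smallest eigenvalue of the matrix E[ Σ_{t=1}^{k⌊(T−1)/k⌋} z_t z_tᵀ ] is at least k·⌊(T−1)/k⌋·ξ²·ν². -/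

import Mathlib

open Matrix MeasureTheory

/-- The `(k,ν,ξ)`-block martingale small-ball (BMSB) condition up to time `T` for an
`ℝ^m`-valued process `z` adapted to the filtration `ℱ`. -/
def BMSB {Ω : Type*} {mΩ : MeasurableSpace Ω} (ℱ : Filtration ℕ mΩ) (P : Measure Ω)
    {m : ℕ} (z : ℕ → Ω → Fin m → ℝ) (T k : ℕ) (ν ξ : ℝ) : Prop :=
  ∀ j : ℕ, j ≤ T - k → ∀ w : Fin m → ℝ, (∑ i, w i ^ 2) = 1 →
    ∀ᵐ ω ∂P, ξ ≤ (1 / (k : ℝ)) * ∑ i ∈ Finset.Icc 1 k,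
      (P[Set.indicator {ω' | ν ≤ |w ⬝ᵥ z (j + i) ω'|} (fun _ => (1 : ℝ)) | ℱ j]) ω


private lemma sum_blocks {M : Type*} [AddCommMonoid M] (f : ℕ → M) (k N : ℕ) :
    ∑ t ∈ Finset.range (k * N), f t
      = ∑ b ∈ Finset.range N, ∑ i ∈ Finset.range k, f (b * k + i) := by
  induction N with
  | zero => simp
  | succ N ih =>
    rw [Nat.mul_succ, Finset.sum_range_add, ih, Finset.sum_range_succ]
    simp [Nat.mul_comm]

private lemma memℒp_dot {Ω : Type*} {mΩ : MeasurableSpace Ω} {P : Measure Ω} {m : ℕ}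
    {f : Ω → Fin m → ℝ} (hf : MemLp f 2 P) (w : Fin m → ℝ) :
    MemLp (fun ω => w ⬝ᵥ f ω) 2 P := by
  have h := (∑ i, w i • ContinuousLinearMap.proj (R := ℝ) (φ := fun _ : Fin m => ℝ) i).comp_memLp' hf
  refine h.ae_eq (Filter.EventuallyEq.of_eq ?_)
  ext ω
  simp [dotProduct, Function.comp]

private lemma markov_sq {Ω : Type*} {mΩ : MeasurableSpace Ω} (P : Measure Ω)
    [IsProbabilityMeasure P]
    {g : Ω → ℝ} (hg : Measurable g) (hg2 : Integrable (fun ω => g ω ^ 2) P)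
    {ν : ℝ} (hν : 0 < ν) :
    ν ^ 2 * (P {ω | ν ≤ |g ω|}).toReal ≤ ∫ ω, g ω ^ 2 ∂P := by
  have hA : MeasurableSet {ω | ν ≤ |g ω|} := measurableSet_le measurable_const hg.abs
  have h1 : ∫ ω, Set.indicator {ω | ν ≤ |g ω|} (fun _ => ν ^ 2) ω ∂P
      = (P {ω | ν ≤ |g ω|}).toReal * ν ^ 2 := by
    rw [integral_indicator_const _ hA]; simp [smul_eq_mul, measureReal_def]
  rw [mul_comm, ← h1]
  apply integral_mono ((integrable_const (ν ^ 2)).indicator hA) hg2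
  intro ω
  by_cases hω : ω ∈ {ω | ν ≤ |g ω|}
  · rw [Set.indicator_of_mem hω]
    calc ν ^ 2 ≤ |g ω| ^ 2 := pow_le_pow_left₀ hν.le hω 2
    _ = g ω ^ 2 := sq_abs _
  · rw [Set.indicator_of_notMem hω]; positivity

private lemma measurable_dot {Ω : Type*} {mΩ : MeasurableSpace Ω} {m : ℕ}
    {f : Ω → Fin m → ℝ} (hf : Measurable f) (w : Fin m → ℝ) :
    Measurable (fun ω => w ⬝ᵥ f ω) := by
  simp_rw [dotProduct]
  exact Finset.measurable_sum _ fun l _ =>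
    measurable_const.mul ((measurable_pi_apply l).comp hf)

private lemma block_bound {Ω : Type*} {mΩ : MeasurableSpace Ω} (ℱ : Filtration ℕ mΩ)
    (P : Measure Ω) [IsProbabilityMeasure P]
    {m : ℕ} (z : ℕ → Ω → Fin m → ℝ)
    (hadapt : ∀ t, StronglyMeasurable[ℱ t] (z t))
    (hL2 : ∀ t, MemLp (z t) 2 P)
    (T k : ℕ) (hk : 1 ≤ k)
    (ν ξ : ℝ) (hν : 0 < ν) (hξ0 : 0 < ξ)
    (hbmsb : BMSB ℱ P z T k ν ξ)
    (j : ℕ) (hj : j ≤ T - k) (w : Fin m → ℝ) (hw : (∑ i, w i ^ 2) = 1) :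
    (k : ℝ) * ξ * ν ^ 2 ≤ ∑ i ∈ Finset.Icc 1 k, ∫ ω, (w ⬝ᵥ z (j + i) ω) ^ 2 ∂P := by
  set A : ℕ → Set Ω := fun t => {ω' | ν ≤ |w ⬝ᵥ z t ω'|} with hAdef
  have hmeas : ∀ t, Measurable (fun ω => w ⬝ᵥ z t ω) := fun t =>
    measurable_dot ((hadapt t).mono (ℱ.le t)).measurable w
  have hA : ∀ t, MeasurableSet (A t) := fun t =>
    measurableSet_le measurable_const (hmeas t).abs
  have hind : ∀ t, Integrable (Set.indicator (A t) (fun _ => (1:ℝ))) P := fun t =>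
    (integrable_const 1).indicator (hA t)
  have hsq : ∀ t, Integrable (fun ω => (w ⬝ᵥ z t ω) ^ 2) P := fun t =>
    (memℒp_dot (hL2 t) w).integrable_sq
  -- integrate the BMSB inequality
  have hce := hbmsb j hj w hw
  have hmono := integral_mono_ae (integrable_const ξ)
    (((integrable_finset_sum (Finset.Icc 1 k) fun i _ =>
      (integrable_condExp : Integrable (P[Set.indicator (A (j+i)) (fun _ => (1:ℝ)) | ℱ j]) P)).const_mul
      (1 / (k:ℝ)))) hce
  have hξle : ξ ≤ (1 / (k:ℝ)) * ∑ i ∈ Finset.Icc 1 k, (P (A (j+i))).toReal := by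
    have h1 : ∫ _ω, ξ ∂P = ξ := by simp
    have h2 : ∫ ω, ((1 / (k:ℝ)) * ∑ i ∈ Finset.Icc 1 k,
        (P[Set.indicator (A (j+i)) (fun _ => (1:ℝ)) | ℱ j]) ω) ∂P
        = (1 / (k:ℝ)) * ∑ i ∈ Finset.Icc 1 k, (P (A (j+i))).toReal := by
      rw [integral_const_mul, integral_finset_sum _ (fun i _ => integrable_condExp)]
      congr 1
      refine Finset.sum_congr rfl fun i _ => ?_
      rw [integral_condExp (ℱ.le j), integral_indicator_const _ (hA (j+i))]
      simp [measureReal_def]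
    rw [h1, h2] at hmono
    exact hmono
  have hk' : (0:ℝ) < (k:ℝ) := by exact_mod_cast hk
  have hkξ : (k:ℝ) * ξ ≤ ∑ i ∈ Finset.Icc 1 k, (P (A (j+i))).toReal := by
    rw [mul_comm, ← le_div_iff₀ hk']
    calc ξ ≤ _ := hξle
    _ = _ := by rw [one_div, inv_mul_eq_div]
  calc (k:ℝ) * ξ * ν ^ 2 = ν ^ 2 * ((k:ℝ) * ξ) := by ring
    _ ≤ ν ^ 2 * ∑ i ∈ Finset.Icc 1 k, (P (A (j+i))).toReal := by
        exact mul_le_mul_of_nonneg_left hkξ (by positivity)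
    _ = ∑ i ∈ Finset.Icc 1 k, ν ^ 2 * (P (A (j+i))).toReal := Finset.mul_sum _ _ _
    _ ≤ ∑ i ∈ Finset.Icc 1 k, ∫ ω, (w ⬝ᵥ z (j + i) ω) ^ 2 ∂P :=
        Finset.sum_le_sum fun i _ => markov_sq P (hmeas (j+i)) (hsq (j+i)) hν

private lemma memℒp_coord {Ω : Type*} {mΩ : MeasurableSpace Ω} {P : Measure Ω} {m : ℕ}
    {f : Ω → Fin m → ℝ} (hf : MemLp f 2 P) (i : Fin m) :
    MemLp (fun ω => f ω i) 2 P := by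
  have h := (ContinuousLinearMap.proj (R := ℝ) (φ := fun _ : Fin m => ℝ) i).comp_memLp' hf
  exact h.ae_eq (Filter.EventuallyEq.of_eq rfl)

private lemma integrable_mul_of_memℒp2 {Ω : Type*} {mΩ : MeasurableSpace Ω} {P : Measure Ω}
    {f g : Ω → ℝ} (hf : MemLp f 2 P) (hg : MemLp g 2 P) :
    Integrable (fun ω => f ω * g ω) P := by
  have h : (fun ω => f ω * g ω)
      = fun ω => ((f ω + g ω) ^ 2 - f ω ^ 2 - g ω ^ 2) / 2 := by ext ω; ring
  rw [h]
  exact (((hf.add hg).integrable_sq.sub hf.integrable_sq).sub hg.integrable_sq).div_const 2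

theorem bmsb_gram_lower_bound
    {Ω : Type*} {mΩ : MeasurableSpace Ω} (ℱ : Filtration ℕ mΩ)
    (P : Measure Ω) [IsProbabilityMeasure P]
    {m : ℕ} (z : ℕ → Ω → Fin m → ℝ)
    (hadapt : ∀ t, StronglyMeasurable[ℱ t] (z t))
    (hL2 : ∀ t, MemLp (z t) 2 P)
    (T k : ℕ) (hk : 1 ≤ k) (hkT : k ≤ T)
    (ν ξ : ℝ) (hν : 0 < ν) (hξ0 : 0 < ξ) (hξ1 : ξ ≤ 1)
    (hbmsb : BMSB ℱ P z T k ν ξ) :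
    (∀ w : Fin m → ℝ, (∑ i, w i ^ 2) = 1 →
        ((k * ((T - 1) / k) : ℕ) : ℝ) * ξ ^ 2 * ν ^ 2
          ≤ ∑ t ∈ Finset.Icc 1 (k * ((T - 1) / k)), ∫ ω, (w ⬝ᵥ z t ω) ^ 2 ∂P) ∧
      (Matrix.of (fun i j =>
            ∫ ω, (∑ t ∈ Finset.Icc 1 (k * ((T - 1) / k)), z t ω i * z t ω j) ∂P)
          - (((k * ((T - 1) / k) : ℕ) : ℝ) * ξ ^ 2 * ν ^ 2) • 1).PosSemidef := by
  set N := (T - 1) / k with hN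
  set n := k * N with hn
  -- part 1
  have part1 : ∀ w : Fin m → ℝ, (∑ i, w i ^ 2) = 1 →
      ((n : ℕ) : ℝ) * ξ ^ 2 * ν ^ 2
        ≤ ∑ t ∈ Finset.Icc 1 n, ∫ ω, (w ⬝ᵥ z t ω) ^ 2 ∂P := by
    intro w hw
    set F : ℕ → ℝ := fun t => ∫ ω, (w ⬝ᵥ z t ω) ^ 2 ∂P with hF
    have hsplit : ∑ t ∈ Finset.Icc 1 n, F t
        = ∑ b ∈ Finset.range N, ∑ i ∈ Finset.Icc 1 k, F (b * k + i) := by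
      rw [← Finset.Ico_add_one_right_eq_Icc, Finset.sum_Ico_eq_sum_range]
      simp only [Nat.succ_sub_one, Nat.add_sub_cancel]
      rw [sum_blocks (fun t => F (1 + t)) k N]
      refine Finset.sum_congr rfl fun b _ => ?_
      rw [← Finset.Ico_add_one_right_eq_Icc, Finset.sum_Ico_eq_sum_range]
      simp only [Nat.succ_sub_one, Nat.add_sub_cancel]
      refine Finset.sum_congr rfl fun i _ => ?_
      congr 1
      omega
    have hblock : ∀ b ∈ Finset.range N,
        (k : ℝ) * ξ * ν ^ 2 ≤ ∑ i ∈ Finset.Icc 1 k, F (b * k + i) := by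
      intro b hb
      refine block_bound ℱ P z hadapt hL2 T k hk ν ξ hν hξ0 hbmsb (b * k) ?_ w hw
      have hb' : b + 1 ≤ N := Finset.mem_range.mp hb
      have h1 : (b + 1) * k ≤ N * k := Nat.mul_le_mul_right k hb'
      have h2 : N * k ≤ T - 1 := by
        rw [hN]; exact Nat.div_mul_le_self (T - 1) k
      have h3 : (b + 1) * k ≤ T - 1 := le_trans h1 h2
      have h4 : (b + 1) * k = b * k + k := by ring
      omega
    have hsum : (N : ℝ) * ((k : ℝ) * ξ * ν ^ 2) ≤ ∑ t ∈ Finset.Icc 1 n, F t := by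
      rw [hsplit]
      calc (N : ℝ) * ((k : ℝ) * ξ * ν ^ 2)
          = ∑ _b ∈ Finset.range N, (k : ℝ) * ξ * ν ^ 2 := by
            rw [Finset.sum_const, Finset.card_range, nsmul_eq_mul]
        _ ≤ _ := Finset.sum_le_sum hblock
    have hξsq : ξ ^ 2 ≤ ξ := by nlinarith
    have hcast : ((n : ℕ) : ℝ) = (k : ℝ) * (N : ℝ) := by rw [hn]; push_cast; ring
    calc ((n : ℕ) : ℝ) * ξ ^ 2 * ν ^ 2 ≤ ((n : ℕ) : ℝ) * ξ * ν ^ 2 := by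
          have hn0 : (0:ℝ) ≤ ((n : ℕ) : ℝ) := Nat.cast_nonneg n
          exact mul_le_mul_of_nonneg_right
            (mul_le_mul_of_nonneg_left hξsq hn0) (sq_nonneg ν)
      _ = (N : ℝ) * ((k : ℝ) * ξ * ν ^ 2) := by rw [hcast]; ring
      _ ≤ _ := hsum
  refine ⟨part1, ?_⟩
  -- part 2
  set c : ℝ := ((n : ℕ) : ℝ) * ξ ^ 2 * ν ^ 2 with hc
  have hc0 : 0 ≤ c := by positivity
  set S : Fin m → Fin m → Ω → ℝ :=
    fun i j ω => ∑ t ∈ Finset.Icc 1 n, z t ω i * z t ω j with hS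
  set M : Matrix (Fin m) (Fin m) ℝ := Matrix.of (fun i j => ∫ ω, S i j ω ∂P) with hM
  have hSint : ∀ i j, Integrable (S i j) P := fun i j =>
    integrable_finset_sum _ fun t _ =>
      integrable_mul_of_memℒp2 (memℒp_coord (hL2 t) i) (memℒp_coord (hL2 t) j)
  have hsqint : ∀ (x : Fin m → ℝ) t, Integrable (fun ω => (x ⬝ᵥ z t ω) ^ 2) P :=
    fun x t => (memℒp_dot (hL2 t) x).integrable_sq
  have hHerm : (M - c • (1 : Matrix (Fin m) (Fin m) ℝ)).IsHermitian := by
    refine Matrix.IsHermitian.sub ?_ ?_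
    · ext i j
      simp only [Matrix.conjTranspose_apply, Matrix.of_apply, hM, star_trivial]
      congr 1
      ext ω
      exact Finset.sum_congr rfl fun t _ => mul_comm _ _
    · ext i j
      simp [Matrix.conjTranspose_apply, Matrix.one_apply]
      split <;> simp_all [eq_comm]
  refine Matrix.posSemidef_iff_dotProduct_mulVec.mpr ⟨hHerm, fun x => ?_⟩
  have hquad : x ⬝ᵥ (M *ᵥ x) = ∑ t ∈ Finset.Icc 1 n, ∫ ω, (x ⬝ᵥ z t ω) ^ 2 ∂P := by
    have h1 : x ⬝ᵥ (M *ᵥ x)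
        = ∑ i, ∑ j, ∫ ω, x i * (S i j ω * x j) ∂P := by
      simp only [dotProduct, Matrix.mulVec, hM, Matrix.of_apply]
      refine Finset.sum_congr rfl fun i _ => ?_
      rw [Finset.mul_sum]
      refine Finset.sum_congr rfl fun j _ => ?_
      rw [← integral_mul_const, ← integral_const_mul]
    have h2 : ∑ i, ∑ j, ∫ ω, x i * (S i j ω * x j) ∂P
        = ∫ ω, ∑ i, ∑ j, x i * (S i j ω * x j) ∂P := by
      rw [integral_finset_sum _ fun i _ => integrable_finset_sum _ fun j _ =>
        (((hSint i j).mul_const (x j)).const_mul (x i))]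
      refine Finset.sum_congr rfl fun i _ => ?_
      rw [integral_finset_sum _ fun j _ => ((hSint i j).mul_const (x j)).const_mul (x i)]
    have h3 : ∀ ω, ∑ t ∈ Finset.Icc 1 n, (x ⬝ᵥ z t ω) ^ 2
        = ∑ i, ∑ j, x i * (S i j ω * x j) := by
      intro ω
      have hsq' : ∀ t, (x ⬝ᵥ z t ω) ^ 2
          = ∑ i, ∑ j, x i * (z t ω i * z t ω j * x j) := by
        intro t
        rw [sq, dotProduct, Finset.sum_mul_sum]
        refine Finset.sum_congr rfl fun i _ => Finset.sum_congr rfl fun j _ => by ring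
      calc ∑ t ∈ Finset.Icc 1 n, (x ⬝ᵥ z t ω) ^ 2
          = ∑ t ∈ Finset.Icc 1 n, ∑ i, ∑ j, x i * (z t ω i * z t ω j * x j) :=
            Finset.sum_congr rfl fun t _ => hsq' t
        _ = ∑ i, ∑ t ∈ Finset.Icc 1 n, ∑ j, x i * (z t ω i * z t ω j * x j) :=
            Finset.sum_comm
        _ = ∑ i, ∑ j, ∑ t ∈ Finset.Icc 1 n, x i * (z t ω i * z t ω j * x j) :=
            Finset.sum_congr rfl fun i _ => Finset.sum_comm
        _ = ∑ i, ∑ j, x i * (S i j ω * x j) := by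
            refine Finset.sum_congr rfl fun i _ => Finset.sum_congr rfl fun j _ => ?_
            simp only [hS, Finset.mul_sum, Finset.sum_mul]
    rw [h1, h2]
    rw [integral_congr_ae (Filter.EventuallyEq.of_eq (funext fun ω => (h3 ω).symm))]
    rw [integral_finset_sum _ fun t _ => hsqint x t]
  have hxx : x ⬝ᵥ x = ∑ i, x i ^ 2 := by
    simp [dotProduct, sq]
  rw [star_trivial, Matrix.sub_mulVec, dotProduct_sub, Matrix.smul_mulVec,
    Matrix.one_mulVec, dotProduct_smul, hquad, smul_eq_mul, hxx, sub_nonneg]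
  set s : ℝ := ∑ i, x i ^ 2 with hs
  have hs0 : 0 ≤ s := Finset.sum_nonneg fun i _ => sq_nonneg _
  rcases eq_or_lt_of_le hs0 with hz0 | hspos
  · rw [← hz0, mul_zero]
    exact Finset.sum_nonneg fun t _ => integral_nonneg fun ω => sq_nonneg _
  · set r := Real.sqrt s with hr
    have hr2 : r ^ 2 = s := Real.sq_sqrt hs0
    have hrpos : 0 < r := Real.sqrt_pos.mpr hspos
    set w : Fin m → ℝ := fun i => r⁻¹ * x i with hwdef
    have hw : (∑ i, w i ^ 2) = 1 := by
      simp only [hwdef, mul_pow, ← Finset.mul_sum, ← hs]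
      rw [inv_pow, hr2, inv_mul_cancel₀ (ne_of_gt hspos)]
    have hkey := part1 w hw
    have hdot : ∀ t ω, (w ⬝ᵥ z t ω) ^ 2 = s⁻¹ * (x ⬝ᵥ z t ω) ^ 2 := by
      intro t ω
      have : w ⬝ᵥ z t ω = r⁻¹ * (x ⬝ᵥ z t ω) := by
        simp [hwdef, dotProduct, Finset.mul_sum, mul_assoc]
      rw [this, mul_pow, inv_pow, hr2]
    have hsum : ∑ t ∈ Finset.Icc 1 n, ∫ ω, (w ⬝ᵥ z t ω) ^ 2 ∂P
        = s⁻¹ * ∑ t ∈ Finset.Icc 1 n, ∫ ω, (x ⬝ᵥ z t ω) ^ 2 ∂P := by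
      rw [Finset.mul_sum]
      refine Finset.sum_congr rfl fun t _ => ?_
      rw [← integral_const_mul]
      exact integral_congr_ae (Filter.EventuallyEq.of_eq (funext fun ω => hdot t ω))
    rw [hsum] at hkey
    calc c * s ≤ (s⁻¹ * ∑ t ∈ Finset.Icc 1 n, ∫ ω, (x ⬝ᵥ z t ω) ^ 2 ∂P) * s :=
          mul_le_mul_of_nonneg_right hkey hs0
      _ = ∑ t ∈ Finset.Icc 1 n, ∫ ω, (x ⬝ᵥ z t ω) ^ 2 ∂P := by
          field_simp
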